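/- Let n ≥ 1 and let A and B be positive semidefinite n×n complex matrices. Then Tr(A^{1/2} B^{1/2}) ≤ Tr((B^{1/2} A B^{1/2})^{1/2}). -/

import Mathlib

open ComplexOrder
open Matrix

open scoped MatrixOrder in
/-- `|A| = (AᴴA)^{1/2}`, the absolute value of a complex matrix. -/
noncomputable def matAbs {n : ℕ} (A : Matrix (Fin n) (Fin n) ℂ) :
    Matrix (Fin n) (Fin n) ℂ :=
  CFC.sqrt (Matrix.conjTranspose A * A)

/-- The real power `A^p` of a matrix, defined via the continuous functional calculus
(meaningful when `A` is Hermitian/positive semidefinite). -/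
noncomputable def mpow {n : ℕ} (A : Matrix (Fin n) (Fin n) ℂ) (p : ℝ) :
    Matrix (Fin n) (Fin n) ℂ :=
  cfc (fun x : ℝ => x ^ p) A

open scoped MatrixOrder in
/-- The singular values `σ₁(A) ≥ σ₂(A) ≥ … ≥ σₙ(A)` of `A`, i.e. the eigenvalues of `|A|`
arranged in decreasing order. -/
noncomputable def singVals {n : ℕ} (A : Matrix (Fin n) (Fin n) ℂ) : Fin n → ℝ :=
  fun k =>
    ((Matrix.LE.le.posSemidef (CFC.sqrt_nonneg (Matrix.conjTranspose A * A))).1.eigenvalues ∘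
      Tuple.sort (Matrix.LE.le.posSemidef (CFC.sqrt_nonneg (Matrix.conjTranspose A * A))).1.eigenvalues) k.rev

/-- `Σ↑(A)`: the diagonal matrix with diagonal entries `σ₁(A), …, σₙ(A)` in that order. -/
noncomputable def SigmaUp {n : ℕ} (A : Matrix (Fin n) (Fin n) ℂ) :
    Matrix (Fin n) (Fin n) ℂ :=
  Matrix.diagonal fun k => (singVals A k : ℂ)

/-- `Σ↓(A)`: the diagonal matrix with diagonal entries `σₙ(A), …, σ₁(A)` in that order. -/
noncomputable def SigmaDown {n : ℕ} (A : Matrix (Fin n) (Fin n) ℂ) :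
    Matrix (Fin n) (Fin n) ℂ :=
  Matrix.diagonal fun k => (singVals A k.rev : ℂ)

/-- `‖A‖_p^p = Tr(|A|^p)`, the `p`-th power of the Schatten `p`-norm. -/
noncomputable def schattenPow {n : ℕ} (p : ℝ) (A : Matrix (Fin n) (Fin n) ℂ) : ℝ :=
  (Matrix.trace (mpow (matAbs A) p)).re

section aux
open Matrix

private lemma mpow_half_isHermitian' {n : ℕ} (A : Matrix (Fin n) (Fin n) ℂ) :
    (mpow A (1/2)).IsHermitian := by
  have : IsSelfAdjoint (mpow A (1/2)) := cfc_predicate _ A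
  exact this

private lemma mpow_half_mul_self' {n : ℕ} {A : Matrix (Fin n) (Fin n) ℂ}
    (hA : A.PosSemidef) : mpow A (1/2) * mpow A (1/2) = A := by
  have hsa : IsSelfAdjoint A := hA.1
  have hcont : ∀ f : ℝ → ℝ, ContinuousOn f (spectrum ℝ A) := fun f =>
    Set.Finite.continuousOn A.finite_real_spectrum f
  rw [mpow, ← cfc_mul _ _ A (hcont _) (hcont _)]
  have h1 : cfc (fun x : ℝ => x ^ (1/2 : ℝ) * x ^ (1/2 : ℝ)) A = cfc (id : ℝ → ℝ) A := by
    apply cfc_congr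
    intro x hx
    have h0 : 0 ≤ x := by
      rw [hA.1.spectrum_real_eq_range_eigenvalues] at hx
      obtain ⟨i, rfl⟩ := hx
      exact hA.eigenvalues_nonneg i
    simp only [id_eq, ← Real.sqrt_eq_rpow]
    exact Real.mul_self_sqrt h0
  rw [h1, cfc_id ℝ A]

private lemma trace_re_le' {n : ℕ} (C : Matrix (Fin n) (Fin n) ℂ) :
    (Matrix.trace C).re ≤ (Matrix.trace (mpow (Cᴴ * C) (1/2))).re := by
  have hS : (Cᴴ * C).PosSemidef := Matrix.posSemidef_conjTranspose_mul_self C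
  have hH := hS.1
  set U : Matrix (Fin n) (Fin n) ℂ := (hH.eigenvectorUnitary : Matrix (Fin n) (Fin n) ℂ) with hUdef
  have hU1 : star U * U = 1 := Unitary.coe_star_mul_self hH.eigenvectorUnitary
  have hU2 : U * star U = 1 := Unitary.coe_mul_star_self hH.eigenvectorUnitary
  have hRHS : Matrix.trace (mpow (Cᴴ * C) (1/2)) =
      ((∑ i, hH.eigenvalues i ^ ((1:ℝ)/2) : ℝ) : ℂ) := by
    rw [mpow, hH.cfc_eq, Matrix.IsHermitian.cfc, Unitary.conjStarAlgAut_apply, Matrix.trace_mul_cycle, hU1, one_mul,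
      Matrix.trace_diagonal]
    push_cast
    rfl
  have hLHS : Matrix.trace C = Matrix.trace (star U * C * U) := by
    rw [Matrix.trace_mul_cycle, hU2, one_mul]
  have key : ∀ i, ((star U * C * U) i i).re ≤ hH.eigenvalues i ^ ((1:ℝ)/2) := by
    intro i
    set x : EuclideanSpace ℂ (Fin n) := hH.eigenvectorBasis i with hxdef
    have hx1 : ‖x‖ = 1 := hH.eigenvectorBasis.orthonormal.1 i
    set v : Fin n → ℂ := ⇑(hH.eigenvectorBasis i) with hvdef
    set y : EuclideanSpace ℂ (Fin n) := (WithLp.equiv 2 _).symm (C *ᵥ v) with hydef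
    have hinner : (inner ℂ x y : ℂ) = dotProduct (star v) (C *ᵥ v) := by
      rw [EuclideanSpace.inner_eq_star_dotProduct, dotProduct_comm]; rfl
    have hinner2 : (inner ℂ y y : ℂ) = dotProduct (star (C *ᵥ v)) (C *ᵥ v) := by
      rw [EuclideanSpace.inner_eq_star_dotProduct, dotProduct_comm]; rfl
    have hxx : (inner ℂ x x : ℂ) = dotProduct (star v) v := by
      rw [EuclideanSpace.inner_eq_star_dotProduct, dotProduct_comm]
    have hvv : dotProduct (star v) v = 1 := by
      rw [← hxx, inner_self_eq_norm_sq_to_K, hx1]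
      norm_num
    have hentry : (star U * C * U) i i = dotProduct (star v) (C *ᵥ v) := by
      simp only [Matrix.mul_apply, Matrix.star_apply, Matrix.mulVec, dotProduct,
        Matrix.IsHermitian.eigenvectorUnitary_apply, Finset.sum_mul, Finset.mul_sum]
      rw [Finset.sum_comm]
      refine Finset.sum_congr rfl fun k _ => Finset.sum_congr rfl fun j _ => ?_
      simp only [Pi.star_apply]
      have h1 : U k i = v k := rfl
      have h2 : U j i = v j := rfl
      rw [h1, h2]
      ring
    have hyy : (inner ℂ y y : ℂ) = ((hH.eigenvalues i : ℝ) : ℂ) := by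
      rw [hinner2, Matrix.star_mulVec, Matrix.dotProduct_mulVec, Matrix.vecMul_vecMul,
        ← Matrix.dotProduct_mulVec]
      rw [hvdef, hH.mulVec_eigenvectorBasis i]
      rw [dotProduct_smul, ← hvdef, hvv]
      simp [Complex.real_smul]
    have hyn : ‖y‖ = Real.sqrt (hH.eigenvalues i) := by
      have h2 : (‖y‖ : ℝ) ^ 2 = hH.eigenvalues i := by
        have h3 := @inner_self_eq_norm_sq ℂ _ _ _ _ y
        rw [hyy] at h3
        simpa using h3.symm
      rw [← Real.sqrt_sq (norm_nonneg y), h2]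
    have hcs : RCLike.re (inner ℂ x y : ℂ) ≤ ‖x‖ * ‖y‖ := re_inner_le_norm x y
    rw [hentry, ← hinner]
    calc (inner ℂ x y : ℂ).re = RCLike.re (inner ℂ x y : ℂ) := rfl
      _ ≤ ‖x‖ * ‖y‖ := hcs
      _ = hH.eigenvalues i ^ ((1:ℝ)/2) := by
          rw [hx1, one_mul, hyn, Real.sqrt_eq_rpow]
  rw [hLHS, hRHS, Complex.ofReal_re, Matrix.trace, Complex.re_sum]
  exact Finset.sum_le_sum fun i _ => key i

end aux

/-- For positive semidefinite `A`, `B`, `Tr(A^{1/2} B^{1/2}) ≤ Tr((B^{1/2} A B^{1/2})^{1/2})`. -/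
theorem trace_sqrt_mul_sqrt_le (n : ℕ) (hn : 1 ≤ n)
    (A B : Matrix (Fin n) (Fin n) ℂ) (hA : A.PosSemidef) (hB : B.PosSemidef) :
    (Matrix.trace (mpow A (1 / 2) * mpow B (1 / 2))).re ≤
      (Matrix.trace (mpow (mpow B (1 / 2) * A * mpow B (1 / 2)) (1 / 2))).re := by
  have hA2 := mpow_half_isHermitian' A
  have hB2 := mpow_half_isHermitian' B
  have hC : (mpow A (1/2) * mpow B (1/2))ᴴ * (mpow A (1/2) * mpow B (1/2)) =
      mpow B (1/2) * A * mpow B (1/2) := by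
    rw [Matrix.conjTranspose_mul, hA2.eq, hB2.eq]
    calc mpow B (1/2) * mpow A (1/2) * (mpow A (1/2) * mpow B (1/2))
        = mpow B (1/2) * (mpow A (1/2) * mpow A (1/2)) * mpow B (1/2) := by noncomm_ring
      _ = mpow B (1/2) * A * mpow B (1/2) := by rw [mpow_half_mul_self' hA]
  have := trace_re_le' (mpow A (1/2) * mpow B (1/2))
  rw [hC] at this
  exact this
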